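/- Let n ≥ 3 be an integer and a ∈ ℂⁿ with e_2(a_{K_i}) = 0 for every i, where K_i = {1,…,n} \ {i}. Set α = Σ_{i=1}^n a_i. Then a_i · α = a_i² for every i ∈ {1,…,n}; consequently every nonzero entry of a equals α. -/

import Mathlib

open Finset in
lemma sq_sum_aux {α : Type*} [DecidableEq α] (s : Finset α) (a : α → ℂ) :
    (∑ j ∈ s, a j) ^ 2 =
      ∑ j ∈ s, a j ^ 2 + 2 * ∑ P ∈ s.powersetCard 2, ∏ j ∈ P, a j := by
  induction s using Finset.induction with
  | empty =>
    have : (∅ : Finset α).powersetCard 2 = ∅ := by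
      ext P; simp [Finset.mem_powersetCard, Finset.subset_empty]
      rintro rfl hc; simp at hc
    simp [this]
  | @insert x t hx ih =>
    have erase_ins : ∀ R : Finset α, R ⊆ t → (insert x R).erase x = R := fun R hR => by
      rw [erase_insert_eq_erase, erase_eq_of_notMem (fun h => hx (hR h))]
    have hdisj : Disjoint (t.powersetCard 2) ((t.powersetCard 1).image (insert x)) := by
      rw [disjoint_right]
      intro P hP hP'
      simp only [mem_image, mem_powersetCard] at hP hP'
      obtain ⟨Q, hQ, rfl⟩ := hP
      exact hx (hP'.1 (mem_insert_self x Q))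
    have hinj : ∀ P ∈ t.powersetCard 1, ∀ Q ∈ t.powersetCard 1,
        insert x P = insert x Q → P = Q := by
      intro P hP Q hQ hPQ
      simp only [mem_powersetCard] at hP hQ
      rw [← erase_ins P hP.1, ← erase_ins Q hQ.1, hPQ]
    rw [sum_insert hx, sum_insert hx, add_sq, ih, powersetCard_succ_insert hx,
      sum_union hdisj, sum_image hinj]
    have hkey : ∑ P ∈ t.powersetCard 1, ∏ j ∈ insert x P, a j = a x * ∑ j ∈ t, a j := by
      rw [powersetCard_one, sum_map, mul_sum]
      refine sum_congr rfl fun y hy => ?_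
      have hxy : x ∉ ({y} : Finset α) := by
        simp only [mem_singleton]; rintro rfl; exact hx hy
      simp [prod_insert hxy]
    rw [hkey]; ring

/-- Let `n ≥ 3` and `a ∈ ℂⁿ` with `e₂(a_{K_i}) = 0` for every `i`, where
`K_i = {1,…,n} \ {i}`. Set `α = Σᵢ aᵢ`. Then `aᵢ · α = aᵢ²` for every `i`; consequently
every nonzero entry of `a` equals `α`. -/
theorem mul_sum_eq_sq (n : ℕ) (hn : 3 ≤ n) (a : Fin n → ℂ)
    (h : ∀ i : Fin n, ∑ P ∈ Finset.powersetCard 2 (Finset.univ \ {i}), ∏ j ∈ P, a j = 0) :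
    (∀ i : Fin n, a i * (∑ k, a k) = (a i) ^ 2) ∧
      (∀ i : Fin n, a i ≠ 0 → a i = ∑ k, a k) := by
  set α := ∑ k, a k with hα
  set S2 := ∑ k, a k ^ 2 with hS2
  -- key: for each i, (α - a i)^2 = S2 - a i ^ 2
  have key : ∀ i : Fin n, (α - a i) ^ 2 = S2 - a i ^ 2 := by
    intro i
    have h1 := sq_sum_aux (Finset.univ \ {i}) a
    rw [h i] at h1
    have h2 : ∑ j ∈ Finset.univ \ {i}, a j = α - a i := by
      rw [Finset.sum_sdiff_eq_sub (by simp)]; simp [hα]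
    have h3 : ∑ j ∈ Finset.univ \ {i}, a j ^ 2 = S2 - a i ^ 2 := by
      rw [Finset.sum_sdiff_eq_sub (by simp)]; simp [hS2]
    rw [h2, h3] at h1; simpa using h1
  -- derive S2 = α^2
  have hkey' : ∀ i : Fin n, 2 * (a i ^ 2 - a i * α) = S2 - α ^ 2 := by
    intro i; have := key i; ring_nf at this ⊢; linear_combination this
  have hsum : 2 * (S2 - α * α) = (n : ℂ) * (S2 - α ^ 2) := by
    have h1 : ∑ i : Fin n, 2 * (a i ^ 2 - a i * α) = (n : ℂ) * (S2 - α ^ 2) := by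
      rw [Finset.sum_congr rfl fun i _ => hkey' i]
      simp [Finset.card_univ]; ring
    have h2 : ∑ i : Fin n, 2 * (a i ^ 2 - a i * α) = 2 * S2 - 2 * α * α := by
      calc ∑ i : Fin n, 2 * (a i ^ 2 - a i * α)
          = ∑ i : Fin n, (2 * a i ^ 2 - 2 * α * a i) :=
            Finset.sum_congr rfl fun i _ => by ring
        _ = 2 * ∑ i : Fin n, a i ^ 2 - 2 * α * ∑ i : Fin n, a i := by
            rw [Finset.sum_sub_distrib, ← Finset.mul_sum, ← Finset.mul_sum]
        _ = 2 * S2 - 2 * α * α := by rw [← hS2, ← hα]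
    linear_combination h1 - h2
  have hn2 : (n : ℂ) - 2 ≠ 0 := by
    intro hc
    have : (n : ℂ) = 2 := by linear_combination hc
    have : n = 2 := by exact_mod_cast this
    omega
  have hS2α : S2 = α ^ 2 := by
    have : ((n : ℂ) - 2) * (S2 - α ^ 2) = 0 := by ring_nf; linear_combination -hsum
    rcases mul_eq_zero.mp this with hc | hc
    · exact absurd hc hn2
    · exact sub_eq_zero.mp hc
  have main : ∀ i : Fin n, a i * α = a i ^ 2 := by
    intro i
    have := hkey' i
    rw [hS2α, sub_self] at this
    have h0 : a i ^ 2 - a i * α = 0 := by linear_combination this / 2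
    linear_combination -h0
  refine ⟨main, fun i hi => ?_⟩
  have := main i
  rw [sq] at this
  exact (mul_left_cancel₀ hi this).symm
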